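/- Mutation-equivalence of Fano polygons, defined by the existence of a finite chain P ≅ P₀, P₁, …, Pₙ ≅ Q in which each P_{i+1} is a mutation of P_i (polygons considered up to GL₂(ℤ)-equivalence), is an equivalence relation: it is reflexive, symmetric and transitive. -/

import Mathlib

open Pointwise

/-- Embedding of the lattice `N = ℤ²` into `N_ℝ = ℝ²`. -/
def emb (v : ℤ × ℤ) : ℝ × ℝ := ((v.1 : ℝ), (v.2 : ℝ))

/-- The set of lattice points of `ℝ²`. -/
def latticePts : Set (ℝ × ℝ) := Set.range emb

/-- A lattice vector is primitive if its coordinates are coprime. -/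
def IsPrimitive (v : ℤ × ℤ) : Prop := Int.gcd v.1 v.2 = 1

/-- The pairing of `ω ∈ M = ℤ²` with a point of `ℝ²`. -/
def pairing (ω : ℤ × ℤ) (x : ℝ × ℝ) : ℝ := ω.1 * x.1 + ω.2 * x.2

/-- A lattice polytope: the convex hull of finitely many lattice points. -/
def IsLatticePolytope (S : Set (ℝ × ℝ)) : Prop :=
  ∃ V : Finset (ℤ × ℤ), S = convexHull ℝ (emb '' ↑V)

/-- A Fano polygon: a lattice polytope with `0` in its interior (hence full-dimensional)
whose vertices are all primitive lattice vectors. -/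
def IsFanoPolygon (P : Set (ℝ × ℝ)) : Prop :=
  IsLatticePolytope P ∧ (0 : ℝ × ℝ) ∈ interior P ∧
    ∀ x ∈ Set.extremePoints ℝ P, ∃ v : ℤ × ℤ, IsPrimitive v ∧ x = emb v

/-- The segment from the origin to `w`. -/
def seg (w : ℝ × ℝ) : Set (ℝ × ℝ) := convexHull ℝ {0, w}

/-- `ω_h(P)`: the convex hull of the lattice points of `P` at level `h` w.r.t. `ω`. -/
def levelHull (P : Set (ℝ × ℝ)) (ω : ℤ × ℤ) (h : ℤ) : Set (ℝ × ℝ) :=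
  convexHull ℝ {x | x ∈ P ∧ x ∈ latticePts ∧ pairing ω x = (h : ℝ)}

/-- Valid data for a mutation of `P`: a primitive `ω`, a primitive `vE` with `ω(vE) = 0`
(so that the factor is `F = conv{0, vE}`), and lattice polytopes `G h` for `h < 0` with
`{vertices of P at level h} ⊆ G h + |h| F ⊆ ω_h(P)`. -/
def IsMutationData (ω vE : ℤ × ℤ) (G : ℤ → Set (ℝ × ℝ)) (P : Set (ℝ × ℝ)) : Prop :=
  IsPrimitive ω ∧ IsPrimitive vE ∧ ω.1 * vE.1 + ω.2 * vE.2 = 0 ∧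
    ∀ h : ℤ, h < 0 → IsLatticePolytope (G h) ∧
      {x ∈ Set.extremePoints ℝ P | pairing ω x = (h : ℝ)} ⊆ G h + seg ((|h| : ℝ) • emb vE) ∧
      G h + seg ((|h| : ℝ) • emb vE) ⊆ levelHull P ω h

/-- The mutation `mut_{(ω,F)}(P)` determined by the data `(ω, vE, G)`. -/
def mutation (ω vE : ℤ × ℤ) (G : ℤ → Set (ℝ × ℝ)) (P : Set (ℝ × ℝ)) : Set (ℝ × ℝ) :=
  convexHull ℝ ((⋃ (h : ℤ) (_ : h < 0), G h) ∪
    (⋃ (h : ℤ) (_ : 0 ≤ h), levelHull P ω h + seg ((h : ℝ) • emb vE)))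

/-- `Q` is a mutation of `P`. -/
def IsMutationOf (Q P : Set (ℝ × ℝ)) : Prop :=
  ∃ ω vE G, IsMutationData ω vE G P ∧ Q = mutation ω vE G P

/-- `GL₂(ℤ)`-equivalence of subsets of `ℝ²`. -/
def UnimodularEquiv (P Q : Set (ℝ × ℝ)) : Prop :=
  ∃ a b c d : ℤ, (a * d - b * c = 1 ∨ a * d - b * c = -1) ∧
    Q = (fun x : ℝ × ℝ => ((a : ℝ) * x.1 + (b : ℝ) * x.2, (c : ℝ) * x.1 + (d : ℝ) * x.2)) '' P

/-- One step of mutation-equivalence: a `GL₂(ℤ)`-transformation or a mutation. -/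
def MutationStep (P Q : Set (ℝ × ℝ)) : Prop := UnimodularEquiv P Q ∨ IsMutationOf Q P

/-- Mutation-equivalence: a finite chain of mutations and `GL₂(ℤ)`-transformations. -/
def MutationEquiv : Set (ℝ × ℝ) → Set (ℝ × ℝ) → Prop := Relation.ReflTransGen MutationStep

/-- The face of `P` on which `pairing ω` is minimal (the edge of `P` with inner normal `ω`
when this face is one-dimensional). -/
def edgeOf (P : Set (ℝ × ℝ)) (ω : ℤ × ℤ) : Set (ℝ × ℝ) :=
  {x ∈ P | ∀ y ∈ P, pairing ω x ≤ pairing ω y}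

/-- `ω` is the primitive inner normal of an edge of `P`. -/
def IsEdgeNormal (P : Set (ℝ × ℝ)) (ω : ℤ × ℤ) : Prop :=
  IsPrimitive ω ∧ ∃ x ∈ edgeOf P ω, ∃ y ∈ edgeOf P ω, x ≠ y

/-- The lattice height of the edge of `P` with inner normal `ω`. -/
noncomputable def edgeHeight (P : Set (ℝ × ℝ)) (ω : ℤ × ℤ) : ℤ :=
  sSup {r : ℤ | ∀ x ∈ P, (-r : ℝ) ≤ pairing ω x}

/-- The number of lattice points on the edge of `P` with inner normal `ω`. -/
noncomputable def edgeLatticeCount (P : Set (ℝ × ℝ)) (ω : ℤ × ℤ) : ℕ :=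
  {v : ℤ × ℤ | emb v ∈ edgeOf P ω}.ncard

/-- The lattice length of the edge of `P` with inner normal `ω`. -/
noncomputable def edgeLength (P : Set (ℝ × ℝ)) (ω : ℤ × ℤ) : ℤ :=
  (edgeLatticeCount P ω : ℤ) - 1

/-- The total number of primitive T-cones of `P`: an edge of lattice length `l` and lattice
height `h` contributes `l / h` primitive T-cones. -/
noncomputable def numTCones (P : Set (ℝ × ℝ)) : ℕ :=
  {p : (ℤ × ℤ) × ℕ | IsEdgeNormal P p.1 ∧
    (p.2 : ℤ) < edgeLength P p.1 / edgeHeight P p.1}.ncard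

/-- The number of edges of `P` whose residual R-cone has lattice length `l` and
lattice height `h`. -/
noncomputable def numRes (P : Set (ℝ × ℝ)) (l h : ℤ) : ℕ :=
  {ω : ℤ × ℤ | IsEdgeNormal P ω ∧ edgeHeight P ω = h ∧
    edgeLength P ω % edgeHeight P ω = l}.ncard

/-- Every residual R-cone of `P` has its (lattice length, lattice height) in `S`. -/
def BasketIn (P : Set (ℝ × ℝ)) (S : Set (ℤ × ℤ)) : Prop :=
  ∀ ω : ℤ × ℤ, IsEdgeNormal P ω →
    edgeLength P ω % edgeHeight P ω = 0 ∨
      (edgeLength P ω % edgeHeight P ω, edgeHeight P ω) ∈ S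

/-- The number of lattice points on the boundary of `P`. -/
noncomputable def boundaryLatticeCount (P : Set (ℝ × ℝ)) : ℕ :=
  {v : ℤ × ℤ | emb v ∈ frontier P}.ncard

/-- A Fano polygon is minimal if no mutation of it has fewer boundary lattice points. -/
def IsMinimalPolygon (P : Set (ℝ × ℝ)) : Prop :=
  ∀ Q : Set (ℝ × ℝ), IsMutationOf Q P → boundaryLatticeCount P ≤ boundaryLatticeCount Q

/-- The maximal lattice height `m_P` of an edge of `P`. -/
noncomputable def maxLocalIndex (P : Set (ℝ × ℝ)) : ℤ :=
  sSup {h : ℤ | ∃ ω, IsEdgeNormal P ω ∧ edgeHeight P ω = h}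

/-- The sum of the vertices of `P`. -/
noncomputable def vertexSum (P : Set (ℝ × ℝ)) : ℝ × ℝ :=
  ∑ᶠ x ∈ Set.extremePoints ℝ P, x

/-- `ω` is the inner normal of a special facet of `P`: the sum of the vertices of `P`
lies in the cone `ℝ_{≥0} E` spanned by the corresponding edge `E`. -/
def IsSpecialFacet (P : Set (ℝ × ℝ)) (ω : ℤ × ℤ) : Prop :=
  IsEdgeNormal P ω ∧ ∃ (c : ℝ) (x : ℝ × ℝ), 0 ≤ c ∧ x ∈ edgeOf P ω ∧ vertexSum P = c • x

/-- The convex hull of a list of lattice points. -/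
def poly (V : List (ℤ × ℤ)) : Set (ℝ × ℝ) := convexHull ℝ (emb '' {v | v ∈ V})

section AuxBasic

lemma emb_add (v w : ℤ × ℤ) : emb (v + w) = emb v + emb w := by
  simp [emb, Prod.ext_iff]

lemma emb_zsmul (n : ℤ) (v : ℤ × ℤ) : emb (n • v) = (n : ℝ) • emb v := by
  simp [emb, Prod.ext_iff]

lemma pairing_add (ω : ℤ × ℤ) (x y : ℝ × ℝ) :
    pairing ω (x + y) = pairing ω x + pairing ω y := by
  simp [pairing]; ring

lemma pairing_smul (ω : ℤ × ℤ) (t : ℝ) (x : ℝ × ℝ) :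
    pairing ω (t • x) = t * pairing ω x := by
  simp [pairing, Prod.smul_fst, Prod.smul_snd, smul_eq_mul]; ring

lemma pairing_emb (ω v : ℤ × ℤ) :
    pairing ω (emb v) = ((ω.1 * v.1 + ω.2 * v.2 : ℤ) : ℝ) := by
  simp [pairing, emb]

lemma pairing_neg (ω : ℤ × ℤ) (x : ℝ × ℝ) : pairing (-ω) x = - pairing ω x := by
  simp [pairing]; ring

lemma convex_pairing_eq (ω : ℤ × ℤ) (c : ℝ) : Convex ℝ {x : ℝ × ℝ | pairing ω x = c} := by
  intro x hx y hy a b ha hb hab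
  simp only [Set.mem_setOf_eq] at *
  rw [pairing_add, pairing_smul, pairing_smul, hx, hy, ← add_mul, hab, one_mul]

lemma mem_seg_iff {w x : ℝ × ℝ} : x ∈ seg w ↔ ∃ t : ℝ, 0 ≤ t ∧ t ≤ 1 ∧ x = t • w := by
  rw [seg, convexHull_pair, segment_eq_image]
  constructor
  · rintro ⟨θ, ⟨h0, h1⟩, rfl⟩; exact ⟨θ, h0, h1, by simp⟩
  · rintro ⟨t, h0, h1, rfl⟩; exact ⟨t, ⟨h0, h1⟩, by simp⟩

lemma zero_mem_seg (w : ℝ × ℝ) : (0 : ℝ × ℝ) ∈ seg w :=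
  mem_seg_iff.2 ⟨0, le_refl _, zero_le_one, by simp⟩

lemma self_mem_seg (w : ℝ × ℝ) : w ∈ seg w :=
  mem_seg_iff.2 ⟨1, zero_le_one, le_refl _, by simp⟩

lemma smul_mem_seg {t : ℝ} (h0 : 0 ≤ t) (h1 : t ≤ 1) (w : ℝ × ℝ) : t • w ∈ seg w :=
  mem_seg_iff.2 ⟨t, h0, h1, rfl⟩

lemma pairing_seg_zero {ω vE : ℤ × ℤ} (hperp : ω.1 * vE.1 + ω.2 * vE.2 = 0)
    (c : ℝ) {z : ℝ × ℝ} (hz : z ∈ seg (c • emb vE)) : pairing ω z = 0 := by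
  obtain ⟨t, _, _, rfl⟩ := mem_seg_iff.1 hz
  rw [pairing_smul, pairing_smul, pairing_emb, hperp]
  simp

lemma levelHull_subset {P : Set (ℝ × ℝ)} (hP : Convex ℝ P) (ω : ℤ × ℤ) (h : ℤ) :
    levelHull P ω h ⊆ P :=
  convexHull_min (fun _ hx => hx.1) hP

lemma pairing_of_mem_levelHull {P : Set (ℝ × ℝ)} {ω : ℤ × ℤ} {h : ℤ} {x : ℝ × ℝ}
    (hx : x ∈ levelHull P ω h) : pairing ω x = (h : ℝ) :=
  convexHull_min (fun _ hy => hy.2.2) (convex_pairing_eq ω (h : ℝ)) hx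

end AuxBasic
section AuxFin

open Set

lemma lattice_finite {P : Set (ℝ × ℝ)} (hP : IsLatticePolytope P) :
    {v : ℤ × ℤ | emb v ∈ P}.Finite := by
  obtain ⟨V, rfl⟩ := hP
  have hcomp : IsCompact (convexHull ℝ (emb '' (V : Set (ℤ × ℤ)))) :=
    (V.finite_toSet.image emb).isCompact_convexHull ℝ
  obtain ⟨r, hr⟩ := isBounded_iff_forall_norm_le.1 hcomp.isBounded
  apply Set.Finite.subset (Set.finite_Icc ((-⌈r⌉, -⌈r⌉) : ℤ × ℤ) ((⌈r⌉, ⌈r⌉) : ℤ × ℤ))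
  intro v hv
  have h1 : ‖emb v‖ ≤ r := hr _ hv
  rw [Prod.norm_def] at h1
  have h2 : |(v.1 : ℝ)| ≤ r := le_trans (le_max_left _ _) (by simpa [emb, Real.norm_eq_abs] using h1)
  have h3 : |(v.2 : ℝ)| ≤ r := le_trans (le_max_right _ _) (by simpa [emb, Real.norm_eq_abs] using h1)
  have hc : (r : ℝ) ≤ (⌈r⌉ : ℤ) := by exact_mod_cast Int.le_ceil r
  rw [abs_le] at h2 h3
  constructor
  · constructor
    · exact_mod_cast le_trans (by linarith : (-(⌈r⌉:ℤ) : ℝ) ≤ (v.1 : ℝ)) (le_refl _)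
    · exact_mod_cast le_trans (by linarith : (-(⌈r⌉:ℤ) : ℝ) ≤ (v.2 : ℝ)) (le_refl _)
  · constructor
    · exact_mod_cast (by linarith : (v.1 : ℝ) ≤ ((⌈r⌉:ℤ) : ℝ))
    · exact_mod_cast (by linarith : (v.2 : ℝ) ≤ ((⌈r⌉:ℤ) : ℝ))

/-- The lattice points of `P` at level `h`. -/
def latSet (P : Set (ℝ × ℝ)) (ω : ℤ × ℤ) (h : ℤ) : Set (ℤ × ℤ) :=
  {v | emb v ∈ P ∧ ω.1 * v.1 + ω.2 * v.2 = h}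

lemma levelSet_eq (P : Set (ℝ × ℝ)) (ω : ℤ × ℤ) (h : ℤ) :
    {x | x ∈ P ∧ x ∈ latticePts ∧ pairing ω x = (h : ℝ)} = emb '' latSet P ω h := by
  ext x
  constructor
  · rintro ⟨hxP, ⟨v, rfl⟩, hpair⟩
    refine ⟨v, ⟨hxP, ?_⟩, rfl⟩
    rw [pairing_emb] at hpair
    exact_mod_cast hpair
  · rintro ⟨v, ⟨hvP, hlev⟩, rfl⟩
    refine ⟨hvP, ⟨v, rfl⟩, ?_⟩
    rw [pairing_emb]
    exact_mod_cast congrArg (fun z : ℤ => (z : ℝ)) hlev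

lemma latSet_finite {P : Set (ℝ × ℝ)} (hP : IsLatticePolytope P) (ω : ℤ × ℤ) (h : ℤ) :
    (latSet P ω h).Finite :=
  (lattice_finite hP).subset (fun _ hv => hv.1)

lemma isLatticePolytope_levelHull {P : Set (ℝ × ℝ)} (hP : IsLatticePolytope P) (ω : ℤ × ℤ)
    (h : ℤ) : IsLatticePolytope (levelHull P ω h) := by
  refine ⟨(latSet_finite hP ω h).toFinset, ?_⟩
  rw [levelHull, levelSet_eq]
  congr 1
  rw [Set.Finite.coe_toFinset]

lemma isLatticePolytope_hull {S T : Set (ℝ × ℝ)} (A : Set (ℤ × ℤ)) (hA : A.Finite)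
    (h1 : T ⊆ convexHull ℝ (emb '' A)) (h2 : emb '' A ⊆ convexHull ℝ T)
    (hS : S = convexHull ℝ T) : IsLatticePolytope S := by
  refine ⟨hA.toFinset, ?_⟩
  rw [hS, Set.Finite.coe_toFinset]
  exact le_antisymm (convexHull_min h1 (convex_convexHull _ _))
    (convexHull_min h2 (convex_convexHull _ _))

lemma interp {a b lo1 hi1 lo2 hi2 t : ℝ} (ha : 0 ≤ a) (hb : 0 ≤ b)
    (h1 : lo1 ≤ hi1) (h2 : lo2 ≤ hi2)
    (hlo : a * lo1 + b * lo2 ≤ t) (hhi : t ≤ a * hi1 + b * hi2) :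
    ∃ t1 t2 : ℝ, lo1 ≤ t1 ∧ t1 ≤ hi1 ∧ lo2 ≤ t2 ∧ t2 ≤ hi2 ∧ a * t1 + b * t2 = t := by
  set D := a * (hi1 - lo1) + b * (hi2 - lo2) with hD
  have hD0 : 0 ≤ D := by
    have := mul_le_mul_of_nonneg_left h1 ha
    have := mul_le_mul_of_nonneg_left h2 hb
    nlinarith
  rcases eq_or_lt_of_le hD0 with hDeq | hDpos
  · refine ⟨lo1, lo2, le_refl _, h1, le_refl _, h2, ?_⟩
    nlinarith
  · set θ := (t - (a * lo1 + b * lo2)) / D with hθ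
    have hθ0 : 0 ≤ θ := div_nonneg (by linarith) (le_of_lt hDpos)
    have hθ1 : θ ≤ 1 := by
      rw [div_le_one hDpos]; nlinarith
    refine ⟨lo1 + θ * (hi1 - lo1), lo2 + θ * (hi2 - lo2), ?_, ?_, ?_, ?_, ?_⟩
    · nlinarith
    · nlinarith
    · nlinarith
    · nlinarith
    · have : a * (lo1 + θ * (hi1 - lo1)) + b * (lo2 + θ * (hi2 - lo2))
          = (a * lo1 + b * lo2) + θ * D := by ring
      rw [this, hθ]
      field_simp
      ring

end AuxFin
section AuxC1

open Set

/-- The generating set of a mutation. -/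
def Sgen (ω vE : ℤ × ℤ) (G : ℤ → Set (ℝ × ℝ)) (P : Set (ℝ × ℝ)) : Set (ℝ × ℝ) :=
  (⋃ (h : ℤ) (_ : h < 0), G h) ∪
    (⋃ (h : ℤ) (_ : 0 ≤ h), levelHull P ω h + seg ((h : ℝ) • emb vE))

lemma mutation_eq_hull (ω vE : ℤ × ℤ) (G : ℤ → Set (ℝ × ℝ)) (P : Set (ℝ × ℝ)) :
    mutation ω vE G P = convexHull ℝ (Sgen ω vE G P) := rfl

lemma mem_Sgen_of_neg {ω vE : ℤ × ℤ} {G : ℤ → Set (ℝ × ℝ)} {P : Set (ℝ × ℝ)} {h : ℤ}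
    (hh : h < 0) {x : ℝ × ℝ} (hx : x ∈ G h) : x ∈ Sgen ω vE G P :=
  Or.inl (Set.mem_iUnion₂.2 ⟨h, hh, hx⟩)

lemma mem_Sgen_of_nonneg {ω vE : ℤ × ℤ} {G : ℤ → Set (ℝ × ℝ)} {P : Set (ℝ × ℝ)} {h : ℤ}
    (hh : 0 ≤ h) {x : ℝ × ℝ} (hx : x ∈ levelHull P ω h + seg ((h : ℝ) • emb vE)) :
    x ∈ Sgen ω vE G P :=
  Or.inr (Set.mem_iUnion₂.2 ⟨h, hh, hx⟩)

lemma Sgen_cases {ω vE : ℤ × ℤ} {G : ℤ → Set (ℝ × ℝ)} {P : Set (ℝ × ℝ)} {x : ℝ × ℝ}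
    (hx : x ∈ Sgen ω vE G P) :
    (∃ h : ℤ, h < 0 ∧ x ∈ G h) ∨
      (∃ h : ℤ, 0 ≤ h ∧ x ∈ levelHull P ω h + seg ((h : ℝ) • emb vE)) := by
  rcases hx with hx | hx
  · left; simpa using Set.mem_iUnion₂.1 hx
  · right; simpa using Set.mem_iUnion₂.1 hx

/-- Key shearing lemma: every point of the mutation at nonpositive level can be pushed
back into `P` along `vE` by up to minus its level. -/
lemma mutation_shear {P : Set (ℝ × ℝ)} {ω vE : ℤ × ℤ} {G : ℤ → Set (ℝ × ℝ)}
    (hPconv : Convex ℝ P)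
    (hperp : ω.1 * vE.1 + ω.2 * vE.2 = 0)
    (hG : ∀ h : ℤ, h < 0 → IsLatticePolytope (G h) ∧
      {x ∈ Set.extremePoints ℝ P | pairing ω x = (h : ℝ)} ⊆ G h + seg ((|h| : ℝ) • emb vE) ∧
      G h + seg ((|h| : ℝ) • emb vE) ⊆ levelHull P ω h) :
    ∀ x ∈ mutation ω vE G P, ∀ t : ℝ, 0 ≤ t → t ≤ -(pairing ω x) →
      x + t • emb vE ∈ P := by
  set W := {x : ℝ × ℝ | ∃ s : ℝ, 0 ≤ s ∧ s ≤ max 0 (pairing ω x) ∧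
    ∀ t : ℝ, -s ≤ t → t ≤ max 0 (pairing ω x) - pairing ω x - s →
      x + t • emb vE ∈ P} with hW
  have hWconv : Convex ℝ W := by
    rintro x ⟨s₁, hs₁0, hs₁f, hx⟩ y ⟨s₂, hs₂0, hs₂f, hy⟩ a b ha hb hab
    have hp : pairing ω (a • x + b • y) = a * pairing ω x + b * pairing ω y := by
      rw [pairing_add, pairing_smul, pairing_smul]
    have hf1 : pairing ω x ≤ max 0 (pairing ω x) := le_max_right _ _
    have hf2 : pairing ω y ≤ max 0 (pairing ω y) := le_max_right _ _
    have hf1' : (0:ℝ) ≤ max 0 (pairing ω x) := le_max_left _ _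
    have hf2' : (0:ℝ) ≤ max 0 (pairing ω y) := le_max_left _ _
    have hmax : max 0 (pairing ω (a • x + b • y))
        ≤ a * max 0 (pairing ω x) + b * max 0 (pairing ω y) := by
      rw [hp]
      apply max_le
      · nlinarith
      · nlinarith
    refine ⟨min (a * s₁ + b * s₂) (max 0 (pairing ω (a • x + b • y))),
      le_min (by nlinarith) (le_max_left _ _), min_le_right _ _, ?_⟩
    intro t ht0 ht1
    rw [hp] at hmax
    have hkey : t ≤ a * (max 0 (pairing ω x) - pairing ω x - s₁)
        + b * (max 0 (pairing ω y) - pairing ω y - s₂) := by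
      rcases min_cases (a * s₁ + b * s₂) (max 0 (pairing ω (a • x + b • y))) with
        ⟨hmin, hle⟩ | ⟨hmin, hle⟩
      · rw [hmin, hp] at ht1
        linarith
      · rw [hmin, hp] at ht1
        have ha1 : a * s₁ ≤ a * max 0 (pairing ω x) :=
          mul_le_mul_of_nonneg_left hs₁f ha
        have hb1 : b * s₂ ≤ b * max 0 (pairing ω y) :=
          mul_le_mul_of_nonneg_left hs₂f hb
        linarith
    have hlo : a * (-s₁) + b * (-s₂) ≤ t := by
      have hm : min (a * s₁ + b * s₂) (max 0 (pairing ω (a • x + b • y))) ≤ a * s₁ + b * s₂ :=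
        min_le_left _ _
      linarith
    obtain ⟨t₁, t₂, h₁lo, h₁hi, h₂lo, h₂hi, hsum⟩ :=
      interp ha hb (by linarith : -s₁ ≤ max 0 (pairing ω x) - pairing ω x - s₁)
        (by linarith : -s₂ ≤ max 0 (pairing ω y) - pairing ω y - s₂) hlo hkey
    have hx1 : x + t₁ • emb vE ∈ P := hx t₁ h₁lo h₁hi
    have hy1 : y + t₂ • emb vE ∈ P := hy t₂ h₂lo h₂hi
    have hmem := hPconv hx1 hy1 ha hb hab
    have heq : a • (x + t₁ • emb vE) + b • (y + t₂ • emb vE)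
        = (a • x + b • y) + t • emb vE := by
      rw [← hsum]
      module
    rwa [heq] at hmem
  have hSW : Sgen ω vE G P ⊆ W := by
    intro x hx
    rcases Sgen_cases hx with ⟨h, hh, hxG⟩ | ⟨h, hh, hxm⟩
    · have hxlev : x ∈ levelHull P ω h := by
        have := (hG h hh).2.2 (Set.add_mem_add hxG (zero_mem_seg _))
        rwa [add_zero] at this
      have hpx : pairing ω x = (h : ℝ) := pairing_of_mem_levelHull hxlev
      have hh' : (h : ℝ) < 0 := by exact_mod_cast hh
      refine ⟨0, le_refl _, le_max_left _ _, ?_⟩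
      intro t ht0 ht1
      rw [neg_zero] at ht0
      rw [hpx, max_eq_left (le_of_lt hh'), sub_zero, zero_sub] at ht1
      have habs : |(h : ℝ)| = -(h : ℝ) := abs_of_neg hh'
      have hne : (0:ℝ) < |(h:ℝ)| := by rw [habs]; linarith
      have hseg : t • emb vE ∈ seg (|(h:ℝ)| • emb vE) := by
        have heq : t • emb vE = (t / |(h:ℝ)|) • (|(h:ℝ)| • emb vE) := by
          rw [smul_smul, div_mul_cancel₀ t (ne_of_gt hne)]
        rw [heq]
        exact smul_mem_seg (div_nonneg ht0 (le_of_lt hne))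
          ((div_le_one hne).2 (by rw [habs]; exact ht1)) _
      have := (hG h hh).2.2 (Set.add_mem_add hxG hseg)
      exact levelHull_subset hPconv ω h this
    · rcases Set.mem_add.1 hxm with ⟨p, hp, z, hz, rfl⟩
      obtain ⟨τ, hτ0, hτ1, rfl⟩ := mem_seg_iff.1 hz
      have hh' : (0:ℝ) ≤ (h : ℝ) := by exact_mod_cast hh
      have hpp : pairing ω p = (h : ℝ) := pairing_of_mem_levelHull hp
      have hpvE : pairing ω (emb vE) = 0 := by
        rw [pairing_emb, hperp]; simp
      have hpx : pairing ω (p + τ • ((h:ℝ) • emb vE)) = (h : ℝ) := by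
        rw [pairing_add, hpp, pairing_smul, pairing_smul, hpvE]; ring
      refine ⟨τ * (h:ℝ), by positivity, ?_, ?_⟩
      · rw [hpx, max_eq_right hh']
        nlinarith
      · intro t ht0 ht1
        rw [hpx, max_eq_right hh'] at ht1
        have hteq : t = -(τ * (h:ℝ)) := by
          apply le_antisymm
          · linarith
          · exact ht0
        have heq : p + τ • ((h:ℝ) • emb vE) + t • emb vE = p := by
          rw [hteq, smul_smul]
          module
        rw [heq]
        exact levelHull_subset hPconv ω h hp
  intro x hx t ht0 ht1
  rw [mutation_eq_hull] at hx
  obtain ⟨s, hs0, hs1, hs⟩ := convexHull_min hSW hWconv hx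
  by_cases hple : pairing ω x ≤ 0
  · have hsz : s = 0 := le_antisymm (by rwa [max_eq_left hple] at hs1) hs0
    apply hs t (by rw [hsz, neg_zero]; exact ht0)
    rw [hsz, max_eq_left hple]
    linarith
  · push_neg at hple
    linarith

end AuxC1
section AuxUni

lemma unimodular_map_lattice {P : Set (ℝ × ℝ)} (hP : IsLatticePolytope P) (a b c d : ℤ) :
    IsLatticePolytope ((fun x : ℝ × ℝ =>
      ((a : ℝ) * x.1 + (b : ℝ) * x.2, (c : ℝ) * x.1 + (d : ℝ) * x.2)) '' P) := by
  obtain ⟨V, rfl⟩ := hP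
  have hlin : IsLinearMap ℝ (fun x : ℝ × ℝ =>
      ((a : ℝ) * x.1 + (b : ℝ) * x.2, (c : ℝ) * x.1 + (d : ℝ) * x.2)) := by
    constructor
    · intro x y
      simp [Prod.ext_iff]
      constructor <;> ring
    · intro t x
      simp [Prod.ext_iff, Prod.smul_fst, Prod.smul_snd, smul_eq_mul]
      constructor <;> ring
  rw [hlin.image_convexHull]
  refine ⟨V.image (fun v => (a * v.1 + b * v.2, c * v.1 + d * v.2)), ?_⟩
  congr 1
  rw [Finset.coe_image, ← Set.image_comp, ← Set.image_comp]
  apply Set.image_congr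
  intro v _
  simp only [Function.comp_apply, emb, Prod.ext_iff]
  push_cast
  exact ⟨rfl, rfl⟩

lemma unimodular_reverse {P Q : Set (ℝ × ℝ)} (hP : IsLatticePolytope P)
    (h : UnimodularEquiv P Q) : IsLatticePolytope Q ∧ UnimodularEquiv Q P := by
  obtain ⟨a, b, c, d, hdet, rfl⟩ := h
  refine ⟨unimodular_map_lattice hP a b c d, ?_⟩
  rcases hdet with hdet | hdet
  · refine ⟨d, -b, -c, a, Or.inl (by linarith [hdet]), ?_⟩
    have hd' : ((a : ℝ) * d - (b : ℝ) * c) = 1 := by exact_mod_cast congrArg (fun z : ℤ => (z : ℝ)) hdet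
    rw [← Set.image_comp]
    have : ∀ x : ℝ × ℝ, ((fun x : ℝ × ℝ =>
        ((d : ℝ) * x.1 + (-b : ℤ) * x.2, ((-c : ℤ) : ℝ) * x.1 + (a : ℝ) * x.2)) ∘
        (fun x : ℝ × ℝ =>
        ((a : ℝ) * x.1 + (b : ℝ) * x.2, (c : ℝ) * x.1 + (d : ℝ) * x.2))) x = x := by
      intro x
      simp [Function.comp, Prod.ext_iff]
      push_cast
      constructor
      · linear_combination x.1 * hd'
      · linear_combination x.2 * hd'
    rw [Set.image_congr (fun x _ => this x), Set.image_id']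
  · refine ⟨-d, b, c, -a, Or.inr (by push_cast; linarith [hdet]), ?_⟩
    have hd' : ((a : ℝ) * d - (b : ℝ) * c) = -1 := by exact_mod_cast congrArg (fun z : ℤ => (z : ℝ)) hdet
    rw [← Set.image_comp]
    have : ∀ x : ℝ × ℝ, ((fun x : ℝ × ℝ =>
        (((-d : ℤ) : ℝ) * x.1 + (b : ℝ) * x.2, (c : ℝ) * x.1 + ((-a : ℤ) : ℝ) * x.2)) ∘
        (fun x : ℝ × ℝ =>
        ((a : ℝ) * x.1 + (b : ℝ) * x.2, (c : ℝ) * x.1 + (d : ℝ) * x.2))) x = x := by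
      intro x
      simp [Function.comp, Prod.ext_iff]
      push_cast
      constructor
      · linear_combination (-x.1) * hd'
      · linear_combination (-x.2) * hd'
    rw [Set.image_congr (fun x _ => this x), Set.image_id']

end AuxUni
section AuxMain

lemma hull_extremePoints {P : Set (ℝ × ℝ)} (hP : IsLatticePolytope P) :
    P = convexHull ℝ (Set.extremePoints ℝ P) := by
  obtain ⟨V, hPV⟩ := hP
  have hPconv : Convex ℝ P := by rw [hPV]; exact convex_convexHull _ _
  have hcomp : IsCompact P := by
    rw [hPV]; exact (V.finite_toSet.image emb).isCompact_convexHull ℝ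
  have hextfin : (Set.extremePoints ℝ P).Finite := by
    apply Set.Finite.subset (V.finite_toSet.image emb)
    rw [hPV]
    exact extremePoints_convexHull_subset
  have h2 : IsCompact (convexHull ℝ (Set.extremePoints ℝ P)) := hextfin.isCompact_convexHull ℝ
  have h3 := closure_convexHull_extremePoints hcomp hPconv
  rw [h2.isClosed.closure_eq] at h3
  exact h3.symm

lemma mutation_reverse {P Q : Set (ℝ × ℝ)} (hP : IsLatticePolytope P)
    (hm : IsMutationOf Q P) : IsLatticePolytope Q ∧ IsMutationOf P Q := by
  obtain ⟨ω, vE, G, hd, rfl⟩ := hm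
  obtain ⟨hω, hvE, hperp, hG⟩ := hd
  obtain ⟨V, hPV⟩ := hP
  have hPlat : IsLatticePolytope P := ⟨V, hPV⟩
  have hPconv : Convex ℝ P := by rw [hPV]; exact convex_convexHull _ _
  have hGsub : ∀ h : ℤ, h < 0 → G h ⊆ levelHull P ω h := by
    intro h hh g hg
    have := (hG h hh).2.2 (Set.add_mem_add hg (zero_mem_seg _))
    rwa [add_zero] at this
  have hGpair : ∀ h : ℤ, h < 0 → ∀ x ∈ G h, pairing ω x = (h : ℝ) :=
    fun h hh x hx => pairing_of_mem_levelHull (hGsub h hh hx)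
  have hSQ : Sgen ω vE G P ⊆ mutation ω vE G P := by
    rw [mutation_eq_hull]; exact subset_convexHull _ _
  have hshear := mutation_shear hPconv hperp hG
  have hGch : ∀ h : ℤ, ∃ W : Finset (ℤ × ℤ), h < 0 → G h = convexHull ℝ (emb '' ↑W) := by
    intro h
    by_cases hh : h < 0
    · obtain ⟨W, hW⟩ := (hG h hh).1
      exact ⟨W, fun _ => hW⟩
    · exact ⟨∅, fun hc => absurd hc hh⟩
  choose AG hAG using hGch
  have hAGP : ∀ h : ℤ, h < 0 → ∀ v ∈ AG h, emb v ∈ G h := by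
    intro h hh v hv
    rw [hAG h hh]
    exact subset_convexHull _ _ ⟨v, hv, rfl⟩
  have hlatP := lattice_finite hPlat
  -- membership of lattice points of P at nonnegative levels in the mutation
  have hlatQ : ∀ v : ℤ × ℤ, emb v ∈ P → 0 ≤ ω.1 * v.1 + ω.2 * v.2 →
      emb v ∈ levelHull P ω (ω.1 * v.1 + ω.2 * v.2) := by
    intro v hv hlv
    exact subset_convexHull _ _ ⟨hv, ⟨v, rfl⟩, pairing_emb ω v⟩
  -- Part 1 : the mutation is a lattice polytope
  have hQlat : IsLatticePolytope (mutation ω vE G P) := by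
    set A : Set (ℤ × ℤ) := (⋃ (h : ℤ) (_ : h < 0), (AG h : Set (ℤ × ℤ))) ∪
      ({v : ℤ × ℤ | emb v ∈ P ∧ 0 ≤ ω.1 * v.1 + ω.2 * v.2} ∪
        (fun v : ℤ × ℤ => v + (ω.1 * v.1 + ω.2 * v.2) • vE) ''
          {v : ℤ × ℤ | emb v ∈ P ∧ 0 ≤ ω.1 * v.1 + ω.2 * v.2}) with hA
    have hAfin : A.Finite := by
      apply Set.Finite.union
      · apply Set.Finite.subset hlatP
        intro v hv
        rw [Set.mem_iUnion₂] at hv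
        obtain ⟨h, hh, hv⟩ := hv
        exact levelHull_subset hPconv ω h (hGsub h hh (hAGP h hh v hv))
      · exact Set.Finite.union (hlatP.subset (fun v hv => hv.1))
          ((hlatP.subset (fun v hv => hv.1)).image _)
    apply isLatticePolytope_hull A hAfin _ _ (mutation_eq_hull ω vE G P)
    · -- generators are in the hull of emb '' A
      intro x hx
      rcases Sgen_cases hx with ⟨h, hh, hxG⟩ | ⟨h, hh, hxm⟩
      · rw [hAG h hh] at hxG
        refine convexHull_mono (Set.image_mono ?_) hxG
        intro v hv
        exact Or.inl (Set.mem_iUnion₂.2 ⟨h, hh, hv⟩)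
      · rcases Set.mem_add.1 hxm with ⟨p, hp, z, hz, rfl⟩
        have hps : p + z ∈ convexHull ℝ
            ({x | x ∈ P ∧ x ∈ latticePts ∧ pairing ω x = (h : ℝ)} +
              ({0, (h : ℝ) • emb vE} : Set (ℝ × ℝ))) := by
          rw [convexHull_add]
          exact Set.add_mem_add hp (by rw [seg] at hz; exact hz)
        refine convexHull_mono ?_ hps
        rintro y ⟨u, hu, w, hw, rfl⟩
        rw [levelSet_eq] at hu
        obtain ⟨v, hv, rfl⟩ := hu
        rcases hw with rfl | hw
        · simp only [add_zero]
          refine ⟨v, Or.inr (Or.inl ⟨hv.1, ?_⟩), rfl⟩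
          exact le_of_le_of_eq hh hv.2.symm
        · rw [Set.mem_singleton_iff] at hw
          subst hw
          refine ⟨v + h • vE, Or.inr (Or.inr ⟨v, ⟨hv.1, le_of_le_of_eq hh hv.2.symm⟩, ?_⟩), ?_⟩
          · simp only [hv.2]
          · rw [emb_add, emb_zsmul]
    · -- emb '' A is in the hull of the generators
      rintro y ⟨v, hv, rfl⟩
      apply subset_convexHull ℝ (Sgen ω vE G P)
      rcases hv with hv | hv | hv
      · rw [Set.mem_iUnion₂] at hv
        obtain ⟨h, hh, hv⟩ := hv
        exact mem_Sgen_of_neg hh (hAGP h hh v hv)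
      · refine mem_Sgen_of_nonneg hv.2 ?_
        have := Set.add_mem_add (hlatQ v hv.1 hv.2) (zero_mem_seg ((((ω.1 * v.1 + ω.2 * v.2) : ℤ) : ℝ) • emb vE))
        rwa [add_zero] at this
      · obtain ⟨u, hu, rfl⟩ := hv
        refine mem_Sgen_of_nonneg hu.2 ?_
        rw [emb_add, emb_zsmul]
        exact Set.add_mem_add (hlatQ u hu.1 hu.2) (self_mem_seg _)
  refine ⟨hQlat, -ω, vE, (fun h => levelHull P ω (-h)), ⟨?_, hvE, ?_, ?_⟩, ?_⟩
  · -- primitivity of -ω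
    simpa [IsPrimitive, Int.gcd, Int.natAbs_neg] using hω
  · -- orthogonality
    simp only [Prod.fst_neg, Prod.snd_neg]
    linarith [hperp]
  · -- conditions at negative levels
    intro h hh
    have hh' : (h : ℝ) < 0 := by exact_mod_cast hh
    have habs : |(h : ℝ)| = ((-h : ℤ) : ℝ) := by rw [abs_of_neg hh']; push_cast; ring
    refine ⟨isLatticePolytope_levelHull hPlat ω (-h), ?_, ?_⟩
    · -- extreme points of Q at level h
      rintro x ⟨hxe, hxp⟩
      rw [pairing_neg] at hxp
      have hxS : x ∈ Sgen ω vE G P := by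
        rw [mutation_eq_hull] at hxe
        exact extremePoints_convexHull_subset hxe
      rcases Sgen_cases hxS with ⟨l, hl, hxG⟩ | ⟨l, hl, hxm⟩
      · exfalso
        have hpl : pairing ω x = (l : ℝ) := hGpair l hl x hxG
        rw [hpl] at hxp
        have hcast : (-l : ℤ) = h := by exact_mod_cast hxp
        omega
      · rcases Set.mem_add.1 hxm with ⟨p, hp, z, hz, rfl⟩
        have hpl : pairing ω (p + z) = (l : ℝ) := by
          rw [pairing_add, pairing_of_mem_levelHull hp, pairing_seg_zero hperp _ hz, add_zero]
        rw [hpl] at hxp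
        have hcast : (-l : ℤ) = h := by exact_mod_cast hxp
        have hleq : l = -h := by omega
        subst hleq
        rw [habs]
        exact Set.add_mem_add (by exact hp) (by push_cast at hz ⊢; exact hz)
    · -- inclusion into the level hull of Q
      have heq : levelHull P ω (-h) + seg (((-h : ℤ) : ℝ) • emb vE)
          = convexHull ℝ ((emb '' latSet P ω (-h)) + ({0, emb ((-h) • vE)} : Set (ℝ × ℝ))) := by
        rw [convexHull_add, levelHull, levelSet_eq, seg, ← emb_zsmul]
      show levelHull P ω (-h) + seg (|(h : ℝ)| • emb vE) ⊆ _
      rw [habs, heq]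
      apply convexHull_min _ (convex_convexHull _ _)
      rintro y ⟨u, hu, w, hw, rfl⟩
      obtain ⟨v, hv, rfl⟩ := hu
      have hvQ : emb v ∈ levelHull P ω (-h) :=
        subset_convexHull _ _ ((levelSet_eq P ω (-h)).symm ▸ ⟨v, hv, rfl⟩)
      apply subset_convexHull ℝ
      rcases hw with rfl | hw
      · simp only [add_zero]
        refine ⟨?_, ⟨v, rfl⟩, ?_⟩
        · apply hSQ
          refine mem_Sgen_of_nonneg (h := -h) (by omega) ?_
          have := Set.add_mem_add hvQ (zero_mem_seg ((((-h) : ℤ) : ℝ) • emb vE))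
          rwa [add_zero] at this
        · rw [pairing_neg, pairing_emb, hv.2]
          push_cast; ring
      · rw [Set.mem_singleton_iff] at hw
        subst hw
        refine ⟨?_, ?_, ?_⟩
        · apply hSQ
          refine mem_Sgen_of_nonneg (h := -h) (by omega) ?_
          rw [emb_zsmul]
          exact Set.add_mem_add hvQ (self_mem_seg _)
        · exact ⟨v + (-h) • vE, by rw [emb_add]⟩
        · rw [pairing_neg, pairing_add, pairing_emb, hv.2, emb_zsmul, pairing_smul,
            pairing_emb, hperp]
          push_cast; ring
  · -- the double mutation is P
    rw [mutation_eq_hull]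
    apply Set.Subset.antisymm
    · -- P ⊆ hull of new generators
      conv_lhs => rw [hull_extremePoints hPlat]
      apply convexHull_min _ (convex_convexHull _ _)
      intro x hx
      have hxV : x ∈ emb '' (V : Set (ℤ × ℤ)) := by
        have hx' := hx
        rw [hPV] at hx'
        exact extremePoints_convexHull_subset hx'
      obtain ⟨v, hvV, rfl⟩ := hxV
      have hxP : emb v ∈ P := extremePoints_subset hx
      set l : ℤ := ω.1 * v.1 + ω.2 * v.2 with hl
      have hpx : pairing ω (emb v) = (l : ℝ) := pairing_emb ω v
      rcases lt_trichotomy l 0 with hlneg | hlzero | hlpos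
      · -- negative level vertex
        have hl' : (l : ℝ) < 0 := by exact_mod_cast hlneg
        have habs : |(l : ℝ)| = ((-l : ℤ) : ℝ) := by rw [abs_of_neg hl']; push_cast; ring
        have hmem := (hG l hlneg).2.1 ⟨hx, hpx⟩
        rcases Set.mem_add.1 hmem with ⟨g, hg, z, hz, hxe⟩
        have hGQ : G l ⊆ levelHull (mutation ω vE G P) (-ω) (-l) := by
          rw [hAG l hlneg]
          apply convexHull_min _ (convex_convexHull _ _)
          rintro y ⟨w, hw, rfl⟩
          apply subset_convexHull ℝ
          refine ⟨hSQ (mem_Sgen_of_neg hlneg (hAGP l hlneg w hw)), ⟨w, rfl⟩, ?_⟩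
          rw [pairing_neg, hGpair l hlneg _ (hAGP l hlneg w hw)]
          push_cast; ring
        apply subset_convexHull ℝ
        refine mem_Sgen_of_nonneg (by linarith : (0:ℤ) ≤ -l) ?_
        rw [← hxe]
        refine Set.add_mem_add (hGQ hg) ?_
        rwa [habs] at hz
      · -- level zero vertex
        have hQ0 : emb v ∈ mutation ω vE G P := by
          apply hSQ
          refine mem_Sgen_of_nonneg (le_refl (0:ℤ)) ?_
          have h0 : emb v ∈ levelHull P ω 0 := by
            apply subset_convexHull ℝ
            exact ⟨hxP, ⟨v, rfl⟩, by rw [hpx, hlzero]⟩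
          have h1 := Set.add_mem_add h0 (zero_mem_seg ((((0:ℤ)) : ℝ) • emb vE))
          rwa [add_zero] at h1
        apply subset_convexHull ℝ
        refine mem_Sgen_of_nonneg (le_refl (0:ℤ)) ?_
        have hD : emb v ∈ levelHull (mutation ω vE G P) (-ω) 0 := by
          apply subset_convexHull ℝ
          refine ⟨hQ0, ⟨v, rfl⟩, ?_⟩
          rw [pairing_neg, hpx, hlzero]; norm_num
          
        have h2 := Set.add_mem_add hD (zero_mem_seg ((((0:ℤ)) : ℝ) • emb vE))
        rwa [add_zero] at h2
      · -- positive level vertex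
        apply subset_convexHull ℝ
        refine mem_Sgen_of_neg (by linarith : -l < 0) ?_
        show emb v ∈ levelHull P ω (-(-l))
        rw [neg_neg]
        exact subset_convexHull _ _ ⟨hxP, ⟨v, rfl⟩, hpx⟩
    · -- hull of new generators ⊆ P
      apply convexHull_min _ hPconv
      intro x hx
      rcases Sgen_cases hx with ⟨h, hh, hxG⟩ | ⟨h, hh, hxm⟩
      · exact levelHull_subset hPconv ω (-h) hxG
      · rcases Set.mem_add.1 hxm with ⟨y, hy, z, hz, rfl⟩
        obtain ⟨τ, hτ0, hτ1, rfl⟩ := mem_seg_iff.1 hz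
        have hh' : (0 : ℝ) ≤ (h : ℝ) := by exact_mod_cast hh
        have hc0 : 0 ≤ τ * (h : ℝ) := by positivity
        have hch : τ * (h : ℝ) ≤ (h : ℝ) := by nlinarith
        have hT : Convex ℝ {y : ℝ × ℝ | y + (τ * (h : ℝ)) • emb vE ∈ P} := by
          intro y₁ h₁ y₂ h₂ a b ha hb hab
          have hmem := hPconv h₁ h₂ ha hb hab
          have heq : a • (y₁ + (τ * (h:ℝ)) • emb vE) + b • (y₂ + (τ * (h:ℝ)) • emb vE)
              = (a • y₁ + b • y₂) + (τ * (h:ℝ)) • emb vE := by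
            rw [smul_add, smul_add, ← add_assoc]
            rw [add_right_comm (a • y₁) (a • ((τ * (h:ℝ)) • emb vE)) (b • y₂)]
            rw [add_assoc, ← add_smul, hab, one_smul]
          rwa [heq] at hmem
        have hDT : {x | x ∈ mutation ω vE G P ∧ x ∈ latticePts ∧ pairing (-ω) x = (h : ℝ)}
            ⊆ {y : ℝ × ℝ | y + (τ * (h : ℝ)) • emb vE ∈ P} := by
          rintro d ⟨hdQ, -, hdp⟩
          rw [pairing_neg] at hdp
          apply hshear d hdQ _ hc0
          rw [show pairing ω d = -(h:ℝ) by linarith [hdp]]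
          simpa using hch
        have hyT' : y + (τ * (h : ℝ)) • emb vE ∈ P := convexHull_min hDT hT hy
        show y + τ • ((h : ℝ) • emb vE) ∈ P
        rwa [smul_smul]

lemma step_reverse {P Q : Set (ℝ × ℝ)} (hP : IsLatticePolytope P)
    (hstep : MutationStep P Q) : IsLatticePolytope Q ∧ MutationStep Q P := by
  rcases hstep with h | h
  · obtain ⟨hQ, hrev⟩ := unimodular_reverse hP h
    exact ⟨hQ, Or.inl hrev⟩
  · obtain ⟨hQ, hrev⟩ := mutation_reverse hP h
    exact ⟨hQ, Or.inr hrev⟩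

lemma equiv_inv {P Q : Set (ℝ × ℝ)} (hP : IsLatticePolytope P)
    (h : MutationEquiv P Q) : IsLatticePolytope Q ∧ MutationEquiv Q P := by
  induction h with
  | refl => exact ⟨hP, Relation.ReflTransGen.refl⟩
  | tail hPR hstep ih =>
    obtain ⟨hR, hRP⟩ := ih
    obtain ⟨hQ, hback⟩ := step_reverse hR hstep
    exact ⟨hQ, Relation.ReflTransGen.head hback hRP⟩

end AuxMain

/-- Mutation-equivalence of Fano polygons is an equivalence relation: reflexive,
symmetric and transitive. -/
theorem mutationEquiv_is_equivalence :
    (∀ P : Set (ℝ × ℝ), IsFanoPolygon P → MutationEquiv P P) ∧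
    (∀ P Q : Set (ℝ × ℝ), IsFanoPolygon P → IsFanoPolygon Q →
      MutationEquiv P Q → MutationEquiv Q P) ∧
    (∀ P Q R : Set (ℝ × ℝ), IsFanoPolygon P → IsFanoPolygon Q → IsFanoPolygon R →
      MutationEquiv P Q → MutationEquiv Q R → MutationEquiv P R) := by
  
  refine ⟨?_, ?_, ?_⟩
  · intro P _
    exact Relation.ReflTransGen.refl
  · intro P Q hP _ h
    exact (equiv_inv hP.1 h).2
  · intro P Q R _ _ _ h1 h2
    exact Relation.ReflTransGen.trans h1 h2
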